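/- Let S be a finite set of n positive integers admitting a minimum solution A, B with |A| + |B| = ℓ, and suppose ℓ > n/2. Then all 2^{n-ℓ} subsets of Z = S \ (A ∪ B) have pairwise distinct sums; consequently the set Ψ = { Σ(X) : X ⊆ S and there exists Y ⊆ S with X ≠ Y and Σ(X) = Σ(Y) } has cardinality at least 2^{n-ℓ}. -/
import Mathlib


theorem stmt_1 (S A B : Finset ℤ) (n ℓ : ℕ) (hn : S.card = n)
    (hpos : ∀ a ∈ S, 0 < a)
    (hA : A ⊆ S) (hB : B ⊆ S) (hdisj : Disjoint A B)
    (hAne : A.Nonempty) (hBne : B.Nonempty)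
    (hsum : A.sum id = B.sum id) (hℓ : ℓ = A.card + B.card)
    (hmin : ∀ A' B' : Finset ℤ, A' ⊆ S → B' ⊆ S → Disjoint A' B' →
      A'.Nonempty → B'.Nonempty → A'.sum id = B'.sum id →
      ℓ ≤ A'.card + B'.card)
    (hbal : n < 2 * ℓ) :
    (∀ Z₁ Z₂ : Finset ℤ, Z₁ ⊆ S \ (A ∪ B) → Z₂ ⊆ S \ (A ∪ B) →
      Z₁.sum id = Z₂.sum id → Z₁ = Z₂) ∧
    2 ^ (n - ℓ) ≤
      Set.ncard { s : ℤ | ∃ X ⊆ S, X.sum id = s ∧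
        ∃ Y ⊆ S, X ≠ Y ∧ X.sum id = Y.sum id } := by
  have hZsub : S \ (A ∪ B) ⊆ S := Finset.sdiff_subset
  have hABS : A ∪ B ⊆ S := Finset.union_subset hA hB
  have hcardAB : (A ∪ B).card = ℓ := by
    rw [Finset.card_union_of_disjoint hdisj, hℓ]
  have hZcard : (S \ (A ∪ B)).card = n - ℓ := by
    rw [Finset.card_sdiff_of_subset hABS, hn, hcardAB]
  have hℓn : ℓ ≤ n := by
    rw [← hn, ← hcardAB]; exact Finset.card_le_card hABS
  -- positivity of sums
  have sum_pos : ∀ X : Finset ℤ, X ⊆ S → X.Nonempty → 0 < X.sum id := by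
    intro X hXS ⟨x, hx⟩
    exact Finset.sum_pos (fun a ha => hpos a (hXS ha)) ⟨x, hx⟩
  have key : ∀ Z₁ Z₂ : Finset ℤ, Z₁ ⊆ S \ (A ∪ B) → Z₂ ⊆ S \ (A ∪ B) →
      Z₁.sum id = Z₂.sum id → Z₁ = Z₂ := by
    intro Z₁ Z₂ h1 h2 hs
    by_contra hne
    set A' := Z₁ \ Z₂ with hA'
    set B' := Z₂ \ Z₁ with hB'
    have hsum' : A'.sum id = B'.sum id := by
      have e1 : (Z₁ ∩ Z₂).sum id + A'.sum id = Z₁.sum id :=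
        Finset.sum_inter_add_sum_sdiff Z₁ Z₂ id
      have e2 : (Z₂ ∩ Z₁).sum id + B'.sum id = Z₂.sum id :=
        Finset.sum_inter_add_sum_sdiff Z₂ Z₁ id
      rw [Finset.inter_comm] at e2
      omega
    have hA'S : A' ⊆ S := fun x hx => hZsub (h1 (Finset.sdiff_subset hx))
    have hB'S : B' ⊆ S := fun x hx => hZsub (h2 (Finset.sdiff_subset hx))
    have hdisj' : Disjoint A' B' := disjoint_sdiff_sdiff
    have hA'ne : A'.Nonempty := by
      rw [Finset.sdiff_nonempty]
      intro hsub
      have hB'ne : B'.Nonempty := by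
        rw [Finset.sdiff_nonempty]
        intro hsub'
        exact hne (Finset.Subset.antisymm hsub hsub')
      have := sum_pos B' hB'S hB'ne
      have : A'.sum id = 0 := by
        have : A' = ∅ := Finset.sdiff_eq_empty_iff_subset.mpr hsub
        simp [this]
      omega
    have hB'ne : B'.Nonempty := by
      rw [Finset.sdiff_nonempty]
      intro hsub
      have := sum_pos A' hA'S hA'ne
      have : B'.sum id = 0 := by
        have : B' = ∅ := Finset.sdiff_eq_empty_iff_subset.mpr hsub
        simp [this]
      omega
    have hmin' := hmin A' B' hA'S hB'S hdisj' hA'ne hB'ne hsum'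
    have hcard' : A'.card + B'.card ≤ n - ℓ := by
      have h1' : A' ⊆ S \ (A ∪ B) := fun x hx => h1 (Finset.sdiff_subset hx)
      have h2' : B' ⊆ S \ (A ∪ B) := fun x hx => h2 (Finset.sdiff_subset hx)
      have : A' ∪ B' ⊆ S \ (A ∪ B) := Finset.union_subset h1' h2'
      have := Finset.card_le_card this
      rw [Finset.card_union_of_disjoint hdisj', hZcard] at this
      exact this
    omega
  refine ⟨key, ?_⟩
  set Ψ : Set ℤ := { s : ℤ | ∃ X ⊆ S, X.sum id = s ∧
        ∃ Y ⊆ S, X ≠ Y ∧ X.sum id = Y.sum id } with hΨ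
  set T : Finset ℤ := (S \ (A ∪ B)).powerset.image (fun X => X.sum id + A.sum id) with hT
  have hTcard : T.card = 2 ^ (n - ℓ) := by
    rw [hT, Finset.card_image_of_injOn, Finset.card_powerset, hZcard]
    intro X hX Y hY hXY
    simp only [Finset.mem_coe, Finset.mem_powerset] at hX hY
    exact key X Y hX hY (add_right_cancel hXY)
  have hTsub : (↑T : Set ℤ) ⊆ Ψ := by
    intro s hs
    simp only [hT, Finset.coe_image, Set.mem_image, Finset.mem_coe,
      Finset.mem_powerset] at hs
    obtain ⟨X, hX, rfl⟩ := hs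
    have hXA : Disjoint X A := by
      refine Finset.disjoint_left.mpr fun x hx hxA => ?_
      have := hX hx
      rw [Finset.mem_sdiff] at this
      exact this.2 (Finset.mem_union_left _ hxA)
    have hXB : Disjoint X B := by
      refine Finset.disjoint_left.mpr fun x hx hxB => ?_
      have := hX hx
      rw [Finset.mem_sdiff] at this
      exact this.2 (Finset.mem_union_right _ hxB)
    refine ⟨X ∪ A, Finset.union_subset (hX.trans hZsub) hA,
      Finset.sum_union hXA, X ∪ B, Finset.union_subset (hX.trans hZsub) hB, ?_, ?_⟩
    · intro h
      obtain ⟨a, ha⟩ := hAne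
      have : a ∈ X ∪ B := h ▸ Finset.mem_union_right _ ha
      rcases Finset.mem_union.mp this with h' | h'
      · exact Finset.disjoint_left.mp hXA h' ha
      · exact Finset.disjoint_left.mp hdisj ha h'
    · rw [Finset.sum_union hXA, Finset.sum_union hXB, hsum]
  have hΨfin : Ψ.Finite := by
    apply Set.Finite.subset (S.powerset.image (fun X => X.sum id)).finite_toSet
    rintro s ⟨X, hX, rfl, -⟩
    exact Finset.mem_coe.mpr (Finset.mem_image_of_mem _ (Finset.mem_powerset.mpr hX))
  calc 2 ^ (n - ℓ) = (↑T : Set ℤ).ncard := by rw [Set.ncard_coe_finset, hTcard]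
    _ ≤ Ψ.ncard := Set.ncard_le_ncard hTsub hΨfin
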